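/- Let n ≥ 2. For every k ≥ 0, every permutation γ of {1,…,n+1}, and every 0 ≤ t ≤ n: if the Weyl chamber C_γ belongs to 𝒞_k, then C_{γ_0^t γ} belongs to 𝒞_k. In other words, each set 𝒞_k of Weyl chambers is invariant under the action of γ_0. -/

import Mathlib

/-- The Weyl chamber `C_γ = {(γ(i),γ(j)) : i < j}` of the `A_n` root system, for a
permutation `γ` of `{1,…,n+1}` (realized as `Fin (n+1)`). -/
def Cham (n : ℕ) (γ : Equiv.Perm (Fin (n + 1))) : Set (Fin (n + 1) × Fin (n + 1)) :=
  { x | ∃ i j : Fin (n + 1), i < j ∧ x = (γ i, γ j) }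

/-- The boundary `∂C_γ = {(γ(i),γ(i+1)) : 1 ≤ i ≤ n}` of the Weyl chamber `C_γ`. -/
def bCham (n : ℕ) (γ : Equiv.Perm (Fin (n + 1))) : Set (Fin (n + 1) × Fin (n + 1)) :=
  { x | ∃ i : Fin n, x = (γ i.castSucc, γ i.succ) }

/-- `{α, β} < 𝒞`: some chamber in the collection `𝒞` contains both roots `α` and `β`. -/
def pairLt {n : ℕ} (𝒞 : Set (Set (Fin (n + 1) × Fin (n + 1))))
    (α β : Fin (n + 1) × Fin (n + 1)) : Prop :=
  ∃ C ∈ 𝒞, α ∈ C ∧ β ∈ C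

/-- The collections `𝒞_k` of Weyl chambers: `𝒞_0 = {C_{γ₀^l} : 0 ≤ l ≤ n}` with `γ₀` the
cyclic permutation `(1 2 … n+1)`, and `C_γ ∈ 𝒞_k` (for `k > 0`) iff (i) every pair of roots
of `∂C_γ` is `< 𝒞_{k-1}` and (ii) whenever `(i,j), (i,j'), (i',j) ∈ C_γ`, both
`{(i,j),(i,j')} < 𝒞_{k-1}` and `{(i,j),(i',j)} < 𝒞_{k-1}`. -/
def Ck (n : ℕ) : ℕ → Set (Set (Fin (n + 1) × Fin (n + 1)))
  | 0 => { C | ∃ l : ℕ, l ≤ n ∧ C = Cham n (finRotate (n + 1) ^ l) }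
  | (k + 1) => { C | ∃ γ : Equiv.Perm (Fin (n + 1)), C = Cham n γ ∧
      (∀ α ∈ bCham n γ, ∀ β ∈ bCham n γ, pairLt (Ck n k) α β) ∧
      (∀ i j i' j' : Fin (n + 1),
        (i, j) ∈ Cham n γ → (i, j') ∈ Cham n γ → (i', j) ∈ Cham n γ →
        pairLt (Ck n k) (i, j) (i, j') ∧ pairLt (Ck n k) (i, j) (i', j)) }


lemma Cham_mul (n : ℕ) (σ γ : Equiv.Perm (Fin (n + 1))) :
    Cham n (σ * γ) = Prod.map σ σ '' Cham n γ := by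
  ext x
  constructor
  · rintro ⟨i, j, hij, rfl⟩; exact ⟨(γ i, γ j), ⟨i, j, hij, rfl⟩, rfl⟩
  · rintro ⟨y, ⟨i, j, hij, rfl⟩, rfl⟩; exact ⟨i, j, hij, rfl⟩

lemma bCham_mul (n : ℕ) (σ γ : Equiv.Perm (Fin (n + 1))) :
    bCham n (σ * γ) = Prod.map σ σ '' bCham n γ := by
  ext x
  constructor
  · rintro ⟨i, rfl⟩; exact ⟨(γ i.castSucc, γ i.succ), ⟨i, rfl⟩, rfl⟩
  · rintro ⟨y, ⟨i, rfl⟩, rfl⟩; exact ⟨i, rfl⟩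

open Fin.NatCast in
lemma finRotate_pow_succ_self (n : ℕ) : finRotate (n + 1) ^ (n + 1) = 1 := by
  ext i
  have key : ∀ m : ℕ, (finRotate (n + 1) ^ m) i = i + (m : Fin (n + 1)) := by
    intro m
    induction m with
    | zero => simp
    | succ m ih =>
      rw [pow_succ', Equiv.Perm.mul_apply, ih, finRotate_succ_apply]
      push_cast; exact add_assoc _ _ _
  simp [key (n + 1)]

lemma finRotate_pow_mod (n a : ℕ) :
    finRotate (n + 1) ^ a = finRotate (n + 1) ^ (a % (n + 1)) := by
  conv_lhs => rw [← Nat.div_add_mod a (n + 1)]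
  rw [pow_add, pow_mul, finRotate_pow_succ_self, one_pow, one_mul]

lemma Ck_exists_cham (n k : ℕ) (C : Set (Fin (n + 1) × Fin (n + 1))) (h : C ∈ Ck n k) :
    ∃ δ : Equiv.Perm (Fin (n + 1)), C = Cham n δ := by
  cases k with
  | zero => obtain ⟨l, -, rfl⟩ := h; exact ⟨_, rfl⟩
  | succ k => obtain ⟨δ, hδ, -, -⟩ := h; exact ⟨δ, hδ⟩

/-- For `n ≥ 2`, every `k ≥ 0`, every permutation `γ` of `{1,…,n+1}` and
every `0 ≤ t ≤ n`: if `C_γ ∈ 𝒞_k` then `C_{γ₀^t γ} ∈ 𝒞_k`; i.e. each collection `𝒞_k` is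
invariant under the action of the cyclic permutation `γ₀ = (1 2 … n+1)`. -/
theorem Ck_invariant_under_rotation (n : ℕ) (hn : 2 ≤ n) (k : ℕ)
    (γ : Equiv.Perm (Fin (n + 1))) (t : ℕ) (ht : t ≤ n)
    (h : Cham n γ ∈ Ck n k) :
    Cham n (finRotate (n + 1) ^ t * γ) ∈ Ck n k := by
  induction k generalizing γ with
  | zero =>
    obtain ⟨l, hl, hC⟩ := h
    refine ⟨(t + l) % (n + 1), Nat.lt_succ_iff.mp (Nat.mod_lt _ (by omega)), ?_⟩
    rw [Cham_mul, hC, ← Cham_mul, ← pow_add, finRotate_pow_mod]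
  | succ k ih =>
    obtain ⟨γ', hC, hb, hcond⟩ := h
    set σ : Equiv.Perm (Fin (n + 1)) := finRotate (n + 1) ^ t with hσ
    have hpair : ∀ α β : Fin (n + 1) × Fin (n + 1), pairLt (Ck n k) α β →
        pairLt (Ck n k) (σ α.1, σ α.2) (σ β.1, σ β.2) := by
      rintro α β ⟨C, hCk, hα, hβ⟩
      obtain ⟨δ, rfl⟩ := Ck_exists_cham n k C hCk
      refine ⟨Cham n (σ * δ), ih δ hCk, ?_, ?_⟩
      · rw [Cham_mul]; exact ⟨α, hα, rfl⟩
      · rw [Cham_mul]; exact ⟨β, hβ, rfl⟩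
    have mem_iff : ∀ (δ : Equiv.Perm (Fin (n + 1))) (x y : Fin (n + 1)),
        (x, y) ∈ Cham n (σ * δ) ↔ (σ⁻¹ x, σ⁻¹ y) ∈ Cham n δ := by
      intro δ x y
      rw [Cham_mul]
      constructor
      · rintro ⟨⟨a, b⟩, hab, hh⟩
        simp only [Prod.map, Prod.mk.injEq] at hh
        obtain ⟨rfl, rfl⟩ := hh
        simpa using hab
      · intro hmem
        exact ⟨(σ⁻¹ x, σ⁻¹ y), hmem, by simp [Prod.map]⟩
    refine ⟨σ * γ', by rw [Cham_mul, hC, ← Cham_mul], ?_, ?_⟩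
    · intro α hα β hβ
      rw [bCham_mul] at hα hβ
      obtain ⟨α₀, hα₀, rfl⟩ := hα
      obtain ⟨β₀, hβ₀, rfl⟩ := hβ
      exact hpair α₀ β₀ (hb _ hα₀ _ hβ₀)
    · intro i j i' j' hij hij' hi'j
      rw [mem_iff] at hij hij' hi'j
      obtain ⟨h1, h2⟩ := hcond _ _ _ _ hij hij' hi'j
      constructor
      · simpa using hpair _ _ h1
      · simpa using hpair _ _ h2
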